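/- Let p(·) ∈ P(ℝ^n) be an exponent function and W: ℝ^n → S_d a matrix weight. If W is a matrix A_{p(·)} weight, i.e., [W]_{A_{p(·)}} = sup_Q |Q|^{−1} ‖ ‖ |W(x)W^{−1}(y)|_op 1_Q(y) ‖_{L^{p'(·)}_y} 1_Q(x) ‖_{L^{p(·)}_x} < ∞, then for every nonzero vector u ∈ F^d, the scalar function w_u(x) = |W(x)u| is a scalar A_{p(·)} weight with [w_u]_{A_{p(·)}} ≤ 4 [W]_{A_{p(·)}}. -/

import Mathlib

open MeasureTheory ENNReal
open scoped ComplexOrder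

noncomputable section

abbrev Euc (n : ℕ) := EuclideanSpace ℝ (Fin n)

/-- The half-open cube with lower-left corner `a` and side length `ℓ`,
with sides parallel to the coordinate axes. -/
def cube {n : ℕ} (a : Euc n) (ℓ : ℝ) : Set (Euc n) :=
  WithLp.ofLp ⁻¹' Set.univ.pi fun i => Set.Ico (a i) (a i + ℓ)

/-- The modular of a variable Lebesgue space with (extended-real valued) exponent `p`:
the integral of `f ^ p` over the set where `p` is finite plus the essential supremum
of `f` over the set where `p = ∞`. -/
def modularE {n : ℕ} (p : Euc n → ℝ≥0∞) (f : Euc n → ℝ≥0∞) : ℝ≥0∞ :=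
  (∫⁻ x in {x | p x ≠ ∞}, f x ^ (p x).toReal) +
    essSup f (volume.restrict {x | p x = ∞})

/-- The Luxemburg norm of the variable Lebesgue space `L^{p(·)}(ℝⁿ)`. -/
def luxNormE {n : ℕ} (p : Euc n → ℝ≥0∞) (f : Euc n → ℝ≥0∞) : ℝ≥0∞ :=
  sInf {l : ℝ≥0∞ | l ≠ 0 ∧ modularE p (fun x => f x / l) ≤ 1}

/-- The Euclidean norm of a vector in `ℂ^d`. -/
def evNorm {d : ℕ} (u : Fin d → ℂ) : ℝ := ‖(WithLp.equiv 2 (Fin d → ℂ)).symm u‖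

/-- The operator norm of a `d × d` complex matrix, induced by the Euclidean norm. -/
def opNorm {d : ℕ} (V : Matrix (Fin d) (Fin d) ℂ) : ℝ :=
  ⨆ u : {u : Fin d → ℂ // evNorm u = 1}, evNorm (V.mulVec u)

lemma modularE_mono {n : ℕ} (p : Euc n → ℝ≥0∞) {f g : Euc n → ℝ≥0∞} (h : ∀ x, f x ≤ g x) :
    modularE p f ≤ modularE p g :=
  add_le_add (lintegral_mono fun x => ENNReal.rpow_le_rpow (h x) ENNReal.toReal_nonneg)
    (essSup_mono_ae (Filter.Eventually.of_forall h))

lemma luxNormE_mono {n : ℕ} (p : Euc n → ℝ≥0∞) {f g : Euc n → ℝ≥0∞} (h : ∀ x, f x ≤ g x) :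
    luxNormE p f ≤ luxNormE p g := by
  apply sInf_le_sInf
  rintro l ⟨hl0, hl⟩
  exact ⟨hl0, le_trans (modularE_mono p fun x => ENNReal.div_le_div_right (h x) l) hl⟩

lemma luxNormE_const_mul_le {n : ℕ} (p : Euc n → ℝ≥0∞) {c : ℝ≥0∞} (hc0 : c ≠ 0) (hct : c ≠ ∞)
    (f : Euc n → ℝ≥0∞) :
    luxNormE p (fun x => c * f x) ≤ c * luxNormE p f := by
  rw [mul_comm, ← ENNReal.div_le_iff hc0 hct]
  apply le_sInf
  rintro l ⟨hl0, hl⟩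
  rw [ENNReal.div_le_iff hc0 hct, mul_comm]
  apply sInf_le
  refine ⟨mul_ne_zero hc0 hl0, ?_⟩
  calc modularE p (fun x => c * f x / (c * l)) = modularE p (fun x => f x / l) := by
        congr 1; funext x; exact ENNReal.mul_div_mul_left _ _ hc0 hct
    _ ≤ 1 := hl

lemma mul_luxNormE_le {n : ℕ} (p : Euc n → ℝ≥0∞) {c : ℝ≥0∞} (hc0 : c ≠ 0) (hct : c ≠ ∞)
    (f : Euc n → ℝ≥0∞) :
    c * luxNormE p f ≤ luxNormE p (fun x => c * f x) := by
  have h1 : luxNormE p f = luxNormE p (fun x => c⁻¹ * (c * f x)) := by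
    congr 1; funext x; rw [← mul_assoc, ENNReal.inv_mul_cancel hc0 hct, one_mul]
  calc c * luxNormE p f = c * luxNormE p (fun x => c⁻¹ * (c * f x)) := by rw [← h1]
    _ ≤ c * (c⁻¹ * luxNormE p (fun x => c * f x)) :=
        mul_le_mul_right (luxNormE_const_mul_le p (ENNReal.inv_ne_zero.mpr hct)
          (ENNReal.inv_ne_top.mpr hc0) _) c
    _ = luxNormE p (fun x => c * f x) := by
        rw [← mul_assoc, ENNReal.mul_inv_cancel hc0 hct, one_mul]

lemma evNorm_mulVec_le {d : ℕ} (V : Matrix (Fin d) (Fin d) ℂ) {v : Fin d → ℂ} (hv : v ≠ 0) :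
    evNorm (V.mulVec v) ≤ opNorm V * evNorm v := by
  classical
  set e := WithLp.equiv 2 (Fin d → ℂ)
  set T := Matrix.toEuclideanCLM (n := Fin d) (𝕜 := ℂ) V with hT
  have key : ∀ w : Fin d → ℂ, evNorm (V.mulVec w) = ‖T (e.symm w)‖ := by
    intro w
    rw [hT]
    rfl
  have bdd : BddAbove (Set.range fun u : {u : Fin d → ℂ // evNorm u = 1} =>
      evNorm (V.mulVec (u : Fin d → ℂ))) := by
    refine ⟨‖T‖, ?_⟩
    rintro _ ⟨u, rfl⟩
    show evNorm (V.mulVec (u : Fin d → ℂ)) ≤ ‖T‖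
    rw [key]
    calc ‖T (e.symm (u : Fin d → ℂ))‖ ≤ ‖T‖ * ‖e.symm (u : Fin d → ℂ)‖ := T.le_opNorm _
      _ = ‖T‖ := by rw [show ‖e.symm (u : Fin d → ℂ)‖ = evNorm (u : Fin d → ℂ) from rfl, u.2,
            mul_one]
  have hxn : 0 < evNorm v := by
    rw [show evNorm v = ‖e.symm v‖ from rfl, norm_pos_iff]
    intro h
    exact hv (e.symm.injective (h.trans (WithLp.toLp_zero (p := 2) (V := Fin d → ℂ)).symm))
  set c : ℝ := evNorm v with hc
  set u₁ : Fin d → ℂ := (c : ℂ)⁻¹ • v with hu₁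
  have hnc : ‖((c : ℂ)⁻¹)‖ = c⁻¹ := by
    rw [norm_inv, Complex.norm_real, Real.norm_eq_abs, abs_of_pos hxn]
  have hev : ∀ w : Fin d → ℂ, evNorm ((c : ℂ)⁻¹ • w) = c⁻¹ * evNorm w := by
    intro w
    show ‖e.symm ((c : ℂ)⁻¹ • w)‖ = _
    rw [show e.symm ((c : ℂ)⁻¹ • w) = (c : ℂ)⁻¹ • e.symm w from rfl, norm_smul, hnc]
    rfl
  have hu₁1 : evNorm u₁ = 1 := by
    rw [hu₁, hev, ← hc, inv_mul_cancel₀ hxn.ne']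
  have hle : evNorm (V.mulVec u₁) ≤ opNorm V :=
    le_ciSup bdd (⟨u₁, hu₁1⟩ : {u : Fin d → ℂ // evNorm u = 1})
  rw [hu₁, Matrix.mulVec_smul, hev] at hle
  calc evNorm (V.mulVec v) = (c⁻¹ * evNorm (V.mulVec v)) * c := by
        field_simp
    _ ≤ opNorm V * c := by
        apply mul_le_mul_of_nonneg_right hle hxn.le


lemma evNorm_nonneg {d : ℕ} (v : Fin d → ℂ) : 0 ≤ evNorm v := norm_nonneg _

lemma evNorm_pos {d : ℕ} {v : Fin d → ℂ} (hv : v ≠ 0) : 0 < evNorm v := by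
  rw [show evNorm v = ‖(WithLp.equiv 2 (Fin d → ℂ)).symm v‖ from rfl, norm_pos_iff]
  intro h
  exact hv ((WithLp.equiv 2 (Fin d → ℂ)).symm.injective (h.trans (WithLp.toLp_zero (p := 2) (V := Fin d → ℂ)).symm))

lemma posDef_mulVec_ne_zero {d : ℕ} {M : Matrix (Fin d) (Fin d) ℂ} (hM : M.PosDef)
    {u : Fin d → ℂ} (hu : u ≠ 0) : M.mulVec u ≠ 0 := by
  intro h
  have h2 := hM.dotProduct_mulVec_pos hu
  rw [h] at h2
  simp [dotProduct_zero] at h2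

/-- Let `p(·) ∈ P(ℝⁿ)` with conjugate `q(·)` and let `W : ℝⁿ → S_d` be
a matrix weight. If `W` is a matrix `A_{p(·)}` weight with characteristic bounded by
`CW`, i.e. for every cube `Q`,
`‖ x ↦ ‖ y ↦ |W(x)W(y)⁻¹|_op 1_Q(y)‖_{L^{q(·)}} 1_Q(x) ‖_{L^{p(·)}} ≤ CW |Q|`,
then for every nonzero `u ∈ ℂ^d` the scalar function `w_u(x) = |W(x)u|` is a scalar
`A_{p(·)}` weight with characteristic at most `4 CW`, i.e. for every cube `Q`,
`‖w_u 1_Q‖_{L^{p(·)}} ‖w_u⁻¹ 1_Q‖_{L^{q(·)}} ≤ 4 CW |Q|`. -/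
theorem stmt13 {n d : ℕ} (p q : Euc n → ℝ≥0∞)
    (hp1 : ∀ x, 1 ≤ p x) (hpq : ∀ x, (p x)⁻¹ + (q x)⁻¹ = 1) (hpm : Measurable p)
    (W : Euc n → Matrix (Fin d) (Fin d) ℂ) (hW : ∀ x, (W x).PosDef)
    (hWm : ∀ i j, Measurable fun x => W x i j)
    (CW : ℝ≥0∞)
    (hWA : ∀ (a : Euc n) (ℓ : ℝ), 0 < ℓ →
      luxNormE p (fun x => (cube a ℓ).indicator (fun x =>
        luxNormE q (fun y => (cube a ℓ).indicator
          (fun y => ENNReal.ofReal (opNorm (W x * (W y)⁻¹))) y)) x) ≤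
        CW * ENNReal.ofReal (ℓ ^ n))
    (u : Fin d → ℂ) (hu : u ≠ 0) :
    ∀ (a : Euc n) (ℓ : ℝ), 0 < ℓ →
      luxNormE p (fun x => (cube a ℓ).indicator
          (fun x => ENNReal.ofReal (evNorm ((W x).mulVec u))) x) *
        luxNormE q (fun y => (cube a ℓ).indicator
          (fun y => (ENNReal.ofReal (evNorm ((W y).mulVec u)))⁻¹) y) ≤
        4 * CW * ENNReal.ofReal (ℓ ^ n) := by
  intro a ℓ hℓ
  set Q := cube a ℓ with hQ
  set w : Euc n → ℝ≥0∞ := fun x => ENNReal.ofReal (evNorm ((W x).mulVec u)) with hw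
  show luxNormE p (fun x => Q.indicator w x) *
      luxNormE q (fun y => Q.indicator (fun y => (w y)⁻¹) y) ≤
      4 * CW * ENNReal.ofReal (ℓ ^ n)
  have hw0 : ∀ x, w x ≠ 0 := fun x =>
    (ENNReal.ofReal_pos.mpr (evNorm_pos (posDef_mulVec_ne_zero (hW x) hu))).ne'
  have hwt : ∀ x, w x ≠ ∞ := fun x => ENNReal.ofReal_ne_top
  have hkey : ∀ x y, w x ≤ ENNReal.ofReal (opNorm (W x * (W y)⁻¹)) * w y := by
    intro x y
    show ENNReal.ofReal (evNorm ((W x).mulVec u)) ≤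
      ENNReal.ofReal (opNorm (W x * (W y)⁻¹)) * ENNReal.ofReal (evNorm ((W y).mulVec u))
    rw [← ENNReal.ofReal_mul' (evNorm_nonneg _)]
    apply ENNReal.ofReal_le_ofReal
    have hvy : (W y).mulVec u ≠ 0 := posDef_mulVec_ne_zero (hW y) hu
    have hle := evNorm_mulVec_le (W x * (W y)⁻¹) hvy
    have heq : (W x * (W y)⁻¹).mulVec ((W y).mulVec u) = (W x).mulVec u := by
      rw [Matrix.mulVec_mulVec, mul_assoc,
        Matrix.nonsing_inv_mul _ ((Matrix.isUnit_iff_isUnit_det _).mp (hW y).isUnit), mul_one]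
    rwa [heq] at hle
  set R := CW * ENNReal.ofReal (ℓ ^ n) with hR
  set A := luxNormE p (fun x => Q.indicator w x) with hA
  set B := luxNormE q (fun y => Q.indicator (fun y => (w y)⁻¹) y) with hB
  have key : ∀ b : ℝ≥0∞, b ≠ 0 → b ≠ ∞ → b ≤ B → b * A ≤ R := by
    intro b hb0 hbt hbB
    have h1 : ∀ x, Q.indicator (fun x => b * w x) x ≤
        Q.indicator (fun x => luxNormE q (fun y => Q.indicator
          (fun y => ENNReal.ofReal (opNorm (W x * (W y)⁻¹))) y)) x := by
      intro x
      apply Set.indicator_le_indicator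
      calc b * w x ≤ B * w x := mul_le_mul_left hbB _
        _ = w x * B := mul_comm _ _
        _ ≤ luxNormE q (fun y => w x * Q.indicator (fun y => (w y)⁻¹) y) := by
            rw [hB]; exact mul_luxNormE_le q (hw0 x) (hwt x) _
        _ ≤ luxNormE q (fun y => Q.indicator
              (fun y => ENNReal.ofReal (opNorm (W x * (W y)⁻¹))) y) := by
            apply luxNormE_mono
            intro y
            by_cases hy : y ∈ Q
            · rw [Set.indicator_of_mem hy, Set.indicator_of_mem hy, ← div_eq_mul_inv,
                ENNReal.div_le_iff (hw0 y) (hwt y)]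
              exact hkey x y
            · rw [Set.indicator_of_notMem hy, Set.indicator_of_notMem hy, mul_zero]
    have h2 : luxNormE p (fun x => Q.indicator (fun x => b * w x) x) ≤ R :=
      le_trans (luxNormE_mono p h1) (hWA a ℓ hℓ)
    have h3 : (fun x => Q.indicator (fun x => b * w x) x) =
        fun x => b * Q.indicator w x := by
      funext x; exact Set.indicator_const_mul Q w b x
    rw [h3] at h2
    exact le_trans (mul_luxNormE_le p hb0 hbt _) h2
  rcases eq_or_ne B 0 with hB0 | hB0
  · rw [hB0, mul_zero]; exact zero_le
  rcases eq_or_ne B ∞ with hBt | hBt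
  · rcases eq_or_ne A 0 with hA0 | hA0
    · rw [hA0, zero_mul]; exact zero_le
    · have hRtop : R = ∞ := by
        by_contra hRt
        have hAt : A ≠ ∞ := by
          intro hAt
          have h := key 1 one_ne_zero ENNReal.one_ne_top (hBt ▸ le_top)
          rw [one_mul, hAt] at h
          exact hRt (top_le_iff.mp h)
        have hb := key (R / A + 1)
          (by simp)
          (ENNReal.add_ne_top.mpr ⟨(ENNReal.div_lt_top hRt hA0).ne, ENNReal.one_ne_top⟩)
          (hBt ▸ le_top)
        rw [add_mul, ENNReal.div_mul_cancel hA0 hAt, one_mul] at hb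
        exact absurd hb (not_le.mpr (ENNReal.lt_add_right hRt hA0))
      rw [mul_assoc, ← hR, hRtop, ENNReal.mul_top (by norm_num)]
      exact le_top
  · have h := key B hB0 hBt le_rfl
    rw [mul_comm]
    refine le_trans h ?_
    rw [mul_assoc, ← hR]
    exact le_mul_of_one_le_left zero_le (by norm_num)
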